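/- The set H̄ of 4×4 complex block matrices of the form [[z^{1/2} (S̄ᴴ)⁻¹, 0],[0, z^{−1/2} S̄]] · [[1, −i r̄],[0, 1]] with z > 0 real, S̄ ∈ SL(2,ℂ), and r̄ a 2×2 Hermitian matrix, is a subgroup of SU(2,2) = {M ∈ GL₄(ℂ) : Mᴴ Σ̄ M = Σ̄, det M = 1}, where Σ̄ is the 4×4 block matrix [[0,1],[1,0]]. -/

import Mathlib

open Matrix

/-- The group metric `Σ̄ = [[0,I₂],[I₂,0]]`. -/
noncomputable def SigBar : Matrix (Fin 2 ⊕ Fin 2) (Fin 2 ⊕ Fin 2) ℂ :=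
  fromBlocks 0 1 1 0

/-- The set `H̄` of matrices `[[z^{1/2}(S̄ᴴ)⁻¹,0],[0,z^{-1/2}S̄]]·[[1,-i r̄],[0,1]]`. -/
noncomputable def HbarSet : Set (Matrix (Fin 2 ⊕ Fin 2) (Fin 2 ⊕ Fin 2) ℂ) :=
  {M | ∃ (z : ℝ) (S r : Matrix (Fin 2) (Fin 2) ℂ), 0 < z ∧ S.det = 1 ∧ r.IsHermitian ∧
    M = fromBlocks ((Real.sqrt z : ℂ) • (Sᴴ)⁻¹) 0 0 (((Real.sqrt z : ℂ)⁻¹) • S) *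
        fromBlocks 1 (-(Complex.I • r)) 0 1}

namespace HbarAux

abbrev M2 := Matrix (Fin 2) (Fin 2) ℂ

/-- the canonical form -/
noncomputable def F (z : ℝ) (S r : M2) : Matrix (Fin 2 ⊕ Fin 2) (Fin 2 ⊕ Fin 2) ℂ :=
  fromBlocks ((Real.sqrt z : ℂ) • (Sᴴ)⁻¹)
    (-(Complex.I • (((Real.sqrt z : ℂ) • (Sᴴ)⁻¹) * r))) 0 (((Real.sqrt z : ℂ))⁻¹ • S)

lemma prod_eq (A C r : M2) :
    fromBlocks A 0 0 C * fromBlocks 1 (-(Complex.I • r)) 0 1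
      = fromBlocks A (-(Complex.I • (A * r))) 0 C := by
  simp only [fromBlocks_multiply, Matrix.mul_one, Matrix.one_mul, Matrix.mul_zero,
    Matrix.zero_mul, add_zero, zero_add, Matrix.mul_neg, mul_smul_comm, smul_zero, neg_zero]

lemma mem_iff {M : Matrix (Fin 2 ⊕ Fin 2) (Fin 2 ⊕ Fin 2) ℂ} :
    M ∈ HbarSet ↔ ∃ z S r, 0 < z ∧ S.det = 1 ∧ r.IsHermitian ∧ M = F z S r := by
  unfold HbarSet F
  simp only [Set.mem_setOf_eq, prod_eq]

lemma sqrt_sq {z : ℝ} (hz : 0 < z) :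
    (Real.sqrt z : ℂ) * (Real.sqrt z : ℂ) = (z : ℂ) := by
  rw [← Complex.ofReal_mul, Real.mul_self_sqrt hz.le]

lemma sqrt_ne {z : ℝ} (hz : 0 < z) : (Real.sqrt z : ℂ) ≠ 0 := by
  exact_mod_cast (Real.sqrt_pos.mpr hz).ne'

lemma hermUnit {S : M2} (hS : S.det = 1) : IsUnit S.det ∧ IsUnit Sᴴ.det := by
  constructor
  · rw [hS]; exact isUnit_one
  · rw [det_conjTranspose, hS]; simp

lemma Fmul {z w : ℝ} (S T r t : M2) (hz : 0 < z) (hw : 0 < w) (hT : T.det = 1) :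
    F z S r * F w T t = F (z * w) (S * T) (t + ((w : ℂ)⁻¹) • (Tᴴ * r * T)) := by
  obtain ⟨hTu, hTHu⟩ := hermUnit hT
  unfold F
  rw [fromBlocks_multiply]
  have hsq : ((Real.sqrt (z * w) : ℝ) : ℂ) = (Real.sqrt z : ℂ) * (Real.sqrt w : ℂ) := by
    rw [Real.sqrt_mul hz.le]; push_cast; ring
  rw [hsq]
  set sz := (Real.sqrt z : ℂ) with hszdef
  set sw := (Real.sqrt w : ℂ) with hswdef
  have hsw2 : sw * sw = (w : ℂ) := sqrt_sq hw
  have hsw0 : sw ≠ 0 := sqrt_ne hw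
  have h1 : (sz • (Sᴴ)⁻¹) * (sw • (Tᴴ)⁻¹) = (sz * sw) • (((S * T)ᴴ)⁻¹) := by
    rw [conjTranspose_mul, Matrix.mul_inv_rev, smul_mul_smul_comm]
  have h2 : ((sz • (Sᴴ)⁻¹) * r) * ((sw⁻¹) • T)
      = ((sz * sw) • (((S * T)ᴴ)⁻¹)) * (((w : ℂ)⁻¹) • (Tᴴ * r * T)) := by
    rw [conjTranspose_mul, Matrix.mul_inv_rev, smul_mul_assoc, smul_mul_smul_comm,
      mul_smul_comm, smul_mul_assoc, smul_smul]
    congr 1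
    · rw [← hsw2, mul_inv]
      field_simp
    · calc (Sᴴ)⁻¹ * r * T = (Sᴴ)⁻¹ * ((Tᴴ)⁻¹ * Tᴴ) * r * T := by
            rw [Matrix.nonsing_inv_mul _ hTHu, Matrix.mul_one]
        _ = (Sᴴ)⁻¹ * (Tᴴ)⁻¹ * (Tᴴ * r * T) := by
            simp only [Matrix.mul_assoc]
  have h3 : ((sz⁻¹) • S) * ((sw⁻¹) • T) = ((sz * sw)⁻¹) • (S * T) := by
    rw [smul_mul_smul_comm, mul_inv]
  have key : ∀ A A' C' t r : M2,
      A * (-(Complex.I • (A' * t))) + (-(Complex.I • (A * r))) * C'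
        = -(Complex.I • (A * A' * t + A * r * C')) := by
    intro A A' C' t r
    rw [Matrix.mul_neg, mul_smul_comm, Matrix.neg_mul, smul_mul_assoc, ← neg_add, ← smul_add]
    simp only [Matrix.mul_assoc]
  rw [Matrix.mul_zero, add_zero, h1, Matrix.zero_mul, Matrix.zero_mul, Matrix.mul_zero,
    add_zero, zero_add, h3, key, h1, h2, ← Matrix.mul_add]

lemma F_one : F 1 1 0 = 1 := by
  unfold F
  simp [fromBlocks_one]

theorem main :
    (∀ M ∈ HbarSet, Mᴴ * SigBar * M = SigBar ∧ M.det = 1) ∧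
    (1 : Matrix (Fin 2 ⊕ Fin 2) (Fin 2 ⊕ Fin 2) ℂ) ∈ HbarSet ∧
    (∀ M ∈ HbarSet, ∀ N ∈ HbarSet, M * N ∈ HbarSet) ∧
    (∀ M ∈ HbarSet, M⁻¹ ∈ HbarSet) := by
  refine ⟨?_, ?_, ?_, ?_⟩
  · rintro M hM
    obtain ⟨z, S, r, hz, hS, hr, rfl⟩ := mem_iff.mp hM
    obtain ⟨hSu, hSHu⟩ := hermUnit hS
    unfold F
    set s := (Real.sqrt z : ℂ) with hsdef
    have hs2 : s * s = (z : ℂ) := sqrt_sq hz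
    have hs0 : s ≠ 0 := sqrt_ne hz
    have hstar : star s = s := Complex.conj_ofReal _
    set A : M2 := s • (Sᴴ)⁻¹ with hA
    set C : M2 := (s⁻¹) • S with hC
    have hAH : Aᴴ = s • S⁻¹ := by
      rw [hA, conjTranspose_smul, conjTranspose_nonsing_inv, conjTranspose_conjTranspose, hstar]
    have hCH : Cᴴ = (s⁻¹) • Sᴴ := by
      rw [hC, conjTranspose_smul, star_inv₀, hstar]
    have hAHC : Aᴴ * C = 1 := by
      rw [hAH, hC, smul_mul_smul_comm, mul_inv_cancel₀ hs0, one_smul,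
        Matrix.nonsing_inv_mul _ hSu]
    have hCHA : Cᴴ * A = 1 := by
      rw [hCH, hA, smul_mul_smul_comm, inv_mul_cancel₀ hs0, one_smul,
        Matrix.mul_nonsing_inv _ hSHu]
    constructor
    · have hB : (-(Complex.I • (A * r)))ᴴ = Complex.I • (r * Aᴴ) := by
        rw [conjTranspose_neg, conjTranspose_smul, conjTranspose_mul, hr.eq]
        simp [Complex.conj_I, neg_smul]
      have hCAr : Cᴴ * (A * r) = r := by
        rw [← Matrix.mul_assoc, hCHA, Matrix.one_mul]
      rw [fromBlocks_conjTranspose, SigBar, fromBlocks_multiply, fromBlocks_multiply]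
      simp only [conjTranspose_zero, Matrix.mul_zero, Matrix.zero_mul, Matrix.mul_one,
        Matrix.one_mul, add_zero, zero_add, smul_zero, neg_zero, hB, Matrix.mul_neg, mul_smul_comm, smul_mul_assoc,
        Matrix.mul_assoc,
        hAHC, hCHA, hCAr, Matrix.mul_one, neg_add_cancel]
    · rw [det_fromBlocks_zero₂₁, hA, hC, det_smul, det_smul, Matrix.det_nonsing_inv,
        det_conjTranspose, hS]
      simp only [Fintype.card_fin, star_one, Ring.inverse_one, mul_one]
      field_simp
  · rw [mem_iff]
    exact ⟨1, 1, 0, one_pos, by simp, isHermitian_zero, F_one.symm⟩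
  · rintro M hM N hN
    obtain ⟨z, S, r, hz, hS, hr, rfl⟩ := mem_iff.mp hM
    obtain ⟨w, T, t, hw, hT, ht, rfl⟩ := mem_iff.mp hN
    rw [mem_iff]
    refine ⟨z * w, S * T, t + ((w : ℂ)⁻¹) • (Tᴴ * r * T), mul_pos hz hw, by simp [hS, hT], ?_,
      Fmul S T r t hz hw hT⟩
    have h1 : (((w : ℂ)⁻¹) • (Tᴴ * r * T)).IsHermitian := by
      rw [Matrix.IsHermitian, conjTranspose_smul, star_inv₀]
      rw [show star ((w : ℂ)) = ((w : ℂ)) from Complex.conj_ofReal _]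
      congr 1
      simp only [conjTranspose_mul, conjTranspose_conjTranspose, hr.eq, Matrix.mul_assoc]
    exact ht.add h1
  · rintro M hM
    obtain ⟨z, S, r, hz, hS, hr, rfl⟩ := mem_iff.mp hM
    obtain ⟨hSu, hSHu⟩ := hermUnit hS
    have hz' : 0 < z⁻¹ := inv_pos.mpr hz
    have hS' : (S⁻¹).det = 1 := by
      rw [Matrix.det_nonsing_inv, hS]; simp
    set t : M2 := -((z : ℂ) • ((S⁻¹)ᴴ * r * S⁻¹)) with htdef
    have hrt : t.IsHermitian := by
      rw [Matrix.IsHermitian, htdef, conjTranspose_neg, conjTranspose_smul]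
      rw [show star ((z : ℂ)) = ((z : ℂ)) from Complex.conj_ofReal _]
      congr 2
      simp only [conjTranspose_mul, conjTranspose_conjTranspose, hr.eq, Matrix.mul_assoc]
    have hprod : F z S r * F z⁻¹ S⁻¹ t = 1 := by
      rw [Fmul S S⁻¹ r t hz hz' hS', mul_inv_cancel₀ hz.ne',
        Matrix.mul_nonsing_inv _ hSu]
      have h0 : t + ((((z⁻¹ : ℝ)) : ℂ))⁻¹ • ((S⁻¹)ᴴ * r * S⁻¹) = 0 := by
        rw [htdef]
        push_cast
        rw [inv_inv, neg_add_cancel]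
      rw [h0, F_one]
    rw [Matrix.inv_eq_right_inv hprod, mem_iff]
    exact ⟨z⁻¹, S⁻¹, t, hz', hS', hrt, rfl⟩

end HbarAux

theorem HbarSet_subgroup_of_SU22 :
    (∀ M ∈ HbarSet, Mᴴ * SigBar * M = SigBar ∧ M.det = 1) ∧
    (1 : Matrix (Fin 2 ⊕ Fin 2) (Fin 2 ⊕ Fin 2) ℂ) ∈ HbarSet ∧
    (∀ M ∈ HbarSet, ∀ N ∈ HbarSet, M * N ∈ HbarSet) ∧
    (∀ M ∈ HbarSet, M⁻¹ ∈ HbarSet) := HbarAux.main
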